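/- Let k ≥ 27 e^{-3}/4 and f_k(t) = (1 - k t^{-2})^{1/2}(1 + e^{-2t}) for t ≥ k^{1/2}. Then f_k(t) ≤ 1 for all t ≥ k^{1/2}. -/
import Mathlib


theorem stmt_2 (k : ℝ) (hk : 27 * Real.exp (-3) / 4 ≤ k) (t : ℝ)
    (ht : Real.sqrt k ≤ t) :
    Real.sqrt (1 - k / t ^ 2) * (1 + Real.exp (-2 * t)) ≤ 1 := by
  have hk0 : 0 < k := lt_of_lt_of_le (by positivity) hk
  have ht0 : 0 < t := lt_of_lt_of_le (Real.sqrt_pos.2 hk0) ht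
  have ht2 : k ≤ t ^ 2 := by
    nlinarith [Real.sq_sqrt hk0.le, Real.sqrt_nonneg k]
  set E := Real.exp (-2 * t) with hE
  have hEpos : 0 < E := Real.exp_pos _
  -- t * exp(-t) ≤ exp(-1)
  have h1 : t * Real.exp (-t) ≤ Real.exp (-1) := by
    have h := Real.add_one_le_exp (t - 1)
    have e1 : Real.exp (t - 1) = Real.exp t * Real.exp (-1) := by
      rw [← Real.exp_add]; ring_nf
    have e2 : Real.exp t * Real.exp (-t) = 1 := by
      rw [← Real.exp_add]; simp
    have h' : t ≤ Real.exp t * Real.exp (-1) := by nlinarith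
    nlinarith [mul_le_mul_of_nonneg_right h' (Real.exp_pos (-t)).le,
      Real.exp_pos (-1), Real.exp_pos (-t)]
  have hE2 : E = (Real.exp (-t)) ^ 2 := by
    rw [hE, show (-2 * t) = (-t) + (-t) by ring, Real.exp_add]; ring
  have hexp2 : Real.exp (-2) = (Real.exp (-1)) ^ 2 := by
    rw [show ((-2 : ℝ)) = (-1) + (-1) by ring, Real.exp_add]; ring
  have hk2 : 2 * Real.exp (-2) ≤ k := by
    have h3 : Real.exp (-3) = Real.exp (-2) * Real.exp (-1) := by
      rw [← Real.exp_add]; norm_num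
    have he : Real.exp 1 < 2.7182818286 := Real.exp_one_lt_d9
    have hinv : Real.exp (-1) * Real.exp 1 = 1 := by
      rw [← Real.exp_add]; simp
    have hp1 : 0 < Real.exp 1 := Real.exp_pos 1
    have hp2 : 0 < Real.exp (-2) := Real.exp_pos _
    -- 8 ≤ 27 * exp (-1) since exp(-1) > 1/2.7182818286 > 8/27
    have h8 : (8 : ℝ) ≤ 27 * Real.exp (-1) := by nlinarith
    nlinarith
  have hkey : 2 * t ^ 2 * E ≤ k := by
    have hte : 0 ≤ t * Real.exp (-t) := by positivity
    have : (t * Real.exp (-t)) ^ 2 ≤ (Real.exp (-1)) ^ 2 :=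
      pow_le_pow_left₀ hte h1 2
    have ht2E : t ^ 2 * E = (t * Real.exp (-t)) ^ 2 := by rw [hE2]; ring
    nlinarith
  have hx : k / t ^ 2 ≤ 1 := by
    rw [div_le_one (by positivity)]; exact ht2
  have hx0 : 0 < k / t ^ 2 := by positivity
  have hb : 0 ≤ 1 - k / (2 * t ^ 2) := by
    have : k / (2 * t ^ 2) = (k / t ^ 2) / 2 := by ring
    rw [this]; linarith
  have hs : Real.sqrt (1 - k / t ^ 2) ≤ 1 - k / (2 * t ^ 2) := by
    have hle : 1 - k / t ^ 2 ≤ (1 - k / (2 * t ^ 2)) ^ 2 := by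
      have heq : k / (2 * t ^ 2) = (k / t ^ 2) / 2 := by ring
      rw [heq]; nlinarith [sq_nonneg (k / t ^ 2)]
    calc Real.sqrt (1 - k / t ^ 2) ≤ Real.sqrt ((1 - k / (2 * t ^ 2)) ^ 2) :=
          Real.sqrt_le_sqrt hle
      _ = 1 - k / (2 * t ^ 2) := Real.sqrt_sq hb
  have h4 : E ≤ k / (2 * t ^ 2) := by
    rw [le_div_iff₀ (by positivity)]; nlinarith
  calc Real.sqrt (1 - k / t ^ 2) * (1 + E)
      ≤ (1 - k / (2 * t ^ 2)) * (1 + E) :=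
        mul_le_mul_of_nonneg_right hs (by positivity)
    _ ≤ 1 := by nlinarith [mul_nonneg (le_trans hEpos.le h4) hEpos.le]
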